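/- Let n ∈ ℕ*, let 0 < μ_2 < … < μ_n and z_1,…,z_n ∈ ℝ. If z_1 ≥ 0, z_1 + … + z_n ≥ 0, and one of the following conditions holds: (i) z_2,…,z_n ≥ 0; (ii) z_2,…,z_n ≤ 0; (iii) there exists j ∈ {2,…,n} such that z_1 ≥ −Σ_{i=2, i≠j}^{n} (1 − μ_i/μ_j) z_i e^{−μ_i s} for all s ∈ ℝ_+; then the function φ(s) = z_1 + z_2 e^{−μ_2 s} + … + z_n e^{−μ_n s} is non-negative on ℝ_+. -/

import Mathlib

/-- Sufficient conditions for non-negativity on `ℝ₊` of the exponential sum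
`φ(s) = z₁ + z₂ e^{-μ₂ s} + ⋯ + zₙ e^{-μₙ s}` with `0 < μ₂ < ⋯ < μₙ`. -/
theorem nonneg_exp_sum_sufficient
    (n : ℕ) (hn : 1 ≤ n) (μ z : ℕ → ℝ)
    (hμpos : ∀ i, 2 ≤ i → i ≤ n → 0 < μ i)
    (hμmono : ∀ i j, 2 ≤ i → i < j → j ≤ n → μ i < μ j)
    (hz1 : 0 ≤ z 1)
    (hsum : 0 ≤ ∑ i ∈ Finset.Icc 1 n, z i)
    (hcase :
      (∀ i, 2 ≤ i → i ≤ n → 0 ≤ z i) ∨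
      (∀ i, 2 ≤ i → i ≤ n → z i ≤ 0) ∨
      (∃ j, 2 ≤ j ∧ j ≤ n ∧ ∀ s : ℝ, 0 ≤ s →
        -(∑ i ∈ (Finset.Icc 2 n).erase j,
            (1 - μ i / μ j) * (z i * Real.exp (-μ i * s))) ≤ z 1)) :
    ∀ s : ℝ, 0 ≤ s →
      0 ≤ z 1 + ∑ i ∈ Finset.Icc 2 n, z i * Real.exp (-μ i * s) := by
  have hsplit : ∑ i ∈ Finset.Icc 1 n, z i = z 1 + ∑ i ∈ Finset.Icc 2 n, z i := by
    have hIcc : Finset.Icc 2 n = Finset.Ioc 1 n := Finset.Icc_add_one_left_eq_Ioc ..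
    rw [Finset.Icc_eq_cons_Ioc hn, Finset.sum_cons, hIcc]
  rcases hcase with h1 | h2 | ⟨j, hj2, hjn, hj⟩
  · intro s hs
    have : 0 ≤ ∑ i ∈ Finset.Icc 2 n, z i * Real.exp (-μ i * s) := by
      apply Finset.sum_nonneg
      intro i hi
      simp only [Finset.mem_Icc] at hi
      exact mul_nonneg (h1 i hi.1 hi.2) (Real.exp_pos _).le
    linarith
  · intro s hs
    have h : ∑ i ∈ Finset.Icc 2 n, z i ≤ ∑ i ∈ Finset.Icc 2 n, z i * Real.exp (-μ i * s) := by
      apply Finset.sum_le_sum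
      intro i hi
      simp only [Finset.mem_Icc] at hi
      have hμ := hμpos i hi.1 hi.2
      have he : Real.exp (-μ i * s) ≤ 1 := by
        rw [Real.exp_le_one_iff]
        nlinarith
      nlinarith [h2 i hi.1 hi.2]
    rw [hsplit] at hsum
    linarith
  · have hμj : 0 < μ j := hμpos j hj2 hjn
    have hμjne : μ j ≠ 0 := hμj.ne'
    set φ : ℝ → ℝ := fun t => z 1 + ∑ i ∈ Finset.Icc 2 n, z i * Real.exp (-μ i * t) with hφ
    set ψ : ℝ → ℝ := fun t => Real.exp (μ j * t) * φ t with hψ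
    have hderiv : ∀ t : ℝ, HasDerivAt ψ
        (μ j * Real.exp (μ j * t) * (z 1 + ∑ i ∈ Finset.Icc 2 n,
          (1 - μ i / μ j) * (z i * Real.exp (-μ i * t)))) t := by
      intro t
      have hφd : HasDerivAt φ
          (∑ i ∈ Finset.Icc 2 n, z i * (Real.exp (-μ i * t) * (-μ i))) t := by
        apply HasDerivAt.const_add
        apply HasDerivAt.fun_sum
        intro i _
        have h1 : HasDerivAt (fun y : ℝ => -μ i * y) (-μ i) t := by
          simpa using (hasDerivAt_id t).const_mul (-μ i)
        exact (h1.exp).const_mul (z i)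
      have h2 : HasDerivAt (fun y : ℝ => μ j * y) (μ j) t := by
        simpa using (hasDerivAt_id t).const_mul (μ j)
      have he : HasDerivAt (fun t => Real.exp (μ j * t)) (Real.exp (μ j * t) * μ j) t :=
        h2.exp
      have hmul : HasDerivAt (fun y => Real.exp (μ j * y) * φ y) (Real.exp (μ j * t) * μ j * φ t
          + Real.exp (μ j * t) * ∑ i ∈ Finset.Icc 2 n, z i * (Real.exp (-μ i * t) * (-μ i))) t :=
        he.mul hφd
      convert hmul using 1
      have hsum' : μ j * (∑ i ∈ Finset.Icc 2 n, (1 - μ i / μ j) * (z i * Real.exp (-μ i * t)))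
          = μ j * (∑ i ∈ Finset.Icc 2 n, z i * Real.exp (-μ i * t))
            + ∑ i ∈ Finset.Icc 2 n, z i * (Real.exp (-μ i * t) * (-μ i)) := by
        rw [Finset.mul_sum, Finset.mul_sum, ← Finset.sum_add_distrib]
        refine Finset.sum_congr rfl fun i _ => ?_
        field_simp
        ring
      simp only [hφ]
      linear_combination Real.exp (μ j * t) * hsum'
    have hdiff : Differentiable ℝ ψ := fun t => (hderiv t).differentiableAt
    have hmono : MonotoneOn ψ (Set.Ici (0 : ℝ)) := by
      apply monotoneOn_of_deriv_nonneg (convex_Ici 0) hdiff.continuous.continuousOn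
        (hdiff.differentiableOn)
      intro x hx
      rw [interior_Ici] at hx
      rw [(hderiv x).deriv]
      have hx0 : (0 : ℝ) ≤ x := le_of_lt hx
      have hkey := hj x hx0
      have heq : (∑ i ∈ (Finset.Icc 2 n).erase j,
            (1 - μ i / μ j) * (z i * Real.exp (-μ i * x)))
          = ∑ i ∈ Finset.Icc 2 n, (1 - μ i / μ j) * (z i * Real.exp (-μ i * x)) :=
        Finset.sum_erase _ (by rw [div_self hμjne]; ring)
      rw [heq] at hkey
      have hpos : 0 ≤ z 1 + ∑ i ∈ Finset.Icc 2 n,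
          (1 - μ i / μ j) * (z i * Real.exp (-μ i * x)) := by linarith
      have : 0 < μ j * Real.exp (μ j * x) := by positivity
      nlinarith
    intro s hs
    have hψs := hmono (Set.self_mem_Ici) hs hs
    have hψ0 : ψ 0 = ∑ i ∈ Finset.Icc 1 n, z i := by
      simp [hψ, hφ, hsplit]
    rw [hψ0] at hψs
    have h0 : 0 ≤ ψ s := le_trans hsum hψs
    have : 0 ≤ Real.exp (μ j * s) * φ s := h0
    exact nonneg_of_mul_nonneg_right this (Real.exp_pos _)
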